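/- Let D be a τ-atomic integral domain with τ symmetric, refinable, and associate preserving. D is a τ-weak finite factorization domain if and only if D is a τ-idf domain. -/

import Mathlib

/-- `a` is a nonzero nonunit, i.e. an element of `D^#`. -/
def NzNonunit {D : Type*} [CommRing D] (a : D) : Prop := a ≠ 0 ∧ ¬ IsUnit a

/-- `l` is the list of factors of a `τ`-factorization of `a`:
`a = λ * l.prod` for a unit `λ`, the factors are nonzero nonunits and pairwise `τ`-related. -/
def TauFact {D : Type*} [CommRing D] (τ : D → D → Prop) (l : List D) (a : D) : Prop :=
  l ≠ [] ∧ (∀ b ∈ l, NzNonunit b) ∧ l.Pairwise τ ∧ ∃ u : Dˣ, a = (u : D) * l.prod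

/-- `b` τ-divides `a`: `b` occurs as a factor in some τ-factorization of `a`. -/
def TauDvd {D : Type*} [CommRing D] (τ : D → D → Prop) (b a : D) : Prop :=
  ∃ l, TauFact τ l a ∧ b ∈ l

/-- `a` is τ-irreducible (a τ-atom): all its τ-factorizations are trivial. -/
def TauIrred {D : Type*} [CommRing D] (τ : D → D → Prop) (a : D) : Prop :=
  NzNonunit a ∧ ∀ l, TauFact τ l a → l.length = 1

/-- `l` is a τ-atomic factorization of `a`. -/
def TauAtomicFact {D : Type*} [CommRing D] (τ : D → D → Prop) (l : List D) (a : D) : Prop :=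
  TauFact τ l a ∧ ∀ b ∈ l, TauIrred τ b

/-- `D` is τ-atomic: every nonzero nonunit has a τ-atomic factorization. -/
def TauAtomic {D : Type*} [CommRing D] (τ : D → D → Prop) : Prop :=
  ∀ a : D, NzNonunit a → ∃ l, TauAtomicFact τ l a

def TauSymm {D : Type*} [CommRing D] (τ : D → D → Prop) : Prop :=
  ∀ a b, τ a b → τ b a

/-- τ is associate preserving. -/
def TauAssocPres {D : Type*} [CommRing D] (τ : D → D → Prop) : Prop :=
  ∀ a b b' : D, τ a b → Associated b b' → τ a b'

/-- τ is refinable: replacing each factor of a τ-factorization by a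
τ-factorization of it again yields a τ-factorization. -/
def TauRefinable {D : Type*} [CommRing D] (τ : D → D → Prop) : Prop :=
  ∀ (a : D) (l : List D) (F : List (List D)),
    TauFact τ l a → List.Forall₂ (fun b m => TauFact τ m b) l F →
    TauFact τ F.flatten a

/-- `a` is a vertex of the τ-irreducible divisor graph `G_τ(x)`. -/
def GVert {D : Type*} [CommRing D] (τ : D → D → Prop) (x a : D) : Prop :=
  TauIrred τ a ∧ TauDvd τ a x

/-- `a` and `b` are adjacent (distinct, i.e. non-associated, vertices joined by an edge)
in `G_τ(x)`: some τ-factorization of `x` contains associates of both. -/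
def GAdj {D : Type*} [CommRing D] (τ : D → D → Prop) (x a b : D) : Prop :=
  GVert τ x a ∧ GVert τ x b ∧ ¬ Associated a b ∧
  ∃ l, TauFact τ l x ∧ (∃ a' ∈ l, Associated a a') ∧ (∃ b' ∈ l, Associated b b')

/-- `G_τ(x)` is connected (vertices are taken up to associates). -/
def GConnected {D : Type*} [CommRing D] (τ : D → D → Prop) (x : D) : Prop :=
  ∀ a b, GVert τ x a → GVert τ x b →
    Relation.ReflTransGen (fun u v => GAdj τ x u v ∨ Associated u v) a b

/-- The reduced graph `G̅_τ(x)` (loops deleted) is connected; loops do not affect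
connectivity, so this is connectivity with respect to the same adjacency relation. -/
def GBarConnected {D : Type*} [CommRing D] (τ : D → D → Prop) (x : D) : Prop :=
  ∀ a b, GVert τ x a → GVert τ x b →
    Relation.ReflTransGen (fun u v => GAdj τ x u v ∨ Associated u v) a b

/-- `G_τ(x)` is a pseudoclique: any two non-associated vertices are adjacent.
(Equivalently, the reduced graph `G̅_τ(x)` is a clique / complete graph.) -/
def GPseudoclique {D : Type*} [CommRing D] (τ : D → D → Prop) (x : D) : Prop :=
  ∀ a b, GVert τ x a → GVert τ x b → ¬ Associated a b → GAdj τ x a b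

/-- `Diam(G_τ(x)) ≤ 1`: any two vertices are equal (associated) or adjacent. -/
def GDiamLeOne {D : Type*} [CommRing D] (τ : D → D → Prop) (x : D) : Prop :=
  ∀ a b, GVert τ x a → GVert τ x b → Associated a b ∨ GAdj τ x a b

/-- `G_τ(x)` has finitely many vertices (up to associates). -/
def GVertFinite {D : Type*} [CommRing D] (τ : D → D → Prop) (x : D) : Prop :=
  ∃ s : Finset D, ∀ a, GVert τ x a → ∃ c ∈ s, Associated a c

/-- The vertex `a` of `G_τ(x)` has finite degree: finitely many adjacent vertices
up to associates (loops not counted). -/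
def GDegFinite {D : Type*} [CommRing D] (τ : D → D → Prop) (x a : D) : Prop :=
  ∃ s : Finset D, ∀ b, GAdj τ x a b → ∃ c ∈ s, Associated b c

/-- The vertex `a` of `G_τ(x)` carries finitely many loops: there is a uniform bound on
the number of occurrences of associates of `a` in τ-atomic factorizations of `x`. -/
def GLoopsFinite {D : Type*} [CommRing D] (τ : D → D → Prop) (x a : D) : Prop :=
  ∃ N : ℕ, ∀ l m : List D, TauAtomicFact τ l x → m.Sublist l →
    (∀ b ∈ m, Associated a b) → m.length ≤ N

/-- `D` satisfies τ-ACCP. -/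
def TauACCP {D : Type*} [CommRing D] (τ : D → D → Prop) : Prop :=
  ∀ a : ℕ → D, (∀ i, TauDvd τ (a (i + 1)) (a i)) →
    ∃ N, ∀ i, N ≤ i → Associated (a i) (a N)

/-- `D` is a τ-UFD. -/
def TauUFD {D : Type*} [CommRing D] (τ : D → D → Prop) : Prop :=
  TauAtomic τ ∧ ∀ (x : D) (l₁ l₂ : List D), TauAtomicFact τ l₁ x → TauAtomicFact τ l₂ x →
    Multiset.Rel Associated (l₁ : Multiset D) (l₂ : Multiset D)

/-- `D` is a τ-FFD: each nonzero nonunit has only finitely many τ-factorizations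
up to rearrangement and associates. -/
def TauFFD {D : Type*} [CommRing D] (τ : D → D → Prop) : Prop :=
  ∀ x : D, NzNonunit x → ∃ S : Finset (Multiset D),
    ∀ l : List D, TauFact τ l x → ∃ m ∈ S, Multiset.Rel Associated (l : Multiset D) m

/-- `D` is a τ-WFFD: each nonzero nonunit has finitely many τ-divisors up to associates. -/
def TauWFFD {D : Type*} [CommRing D] (τ : D → D → Prop) : Prop :=
  ∀ x : D, NzNonunit x → ∃ s : Finset D,
    ∀ b, TauDvd τ b x → ∃ c ∈ s, Associated b c

/-- `D` is a τ-idf domain: each nonzero nonunit has finitely many τ-irreducible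
τ-divisors up to associates. -/
def TauIdf {D : Type*} [CommRing D] (τ : D → D → Prop) : Prop :=
  ∀ x : D, NzNonunit x → ∃ s : Finset D,
    ∀ b, TauIrred τ b → TauDvd τ b x → ∃ c ∈ s, Associated b c



private lemma assocProdMap {D : Type*} [CommMonoid D] (m : Multiset D) (f : D → D)
    (h : ∀ e ∈ m, Associated e (f e)) : Associated m.prod (m.map f).prod := by
  induction m using Multiset.induction_on with
  | empty => simp
  | cons a s ih =>
    simp only [Multiset.map_cons, Multiset.prod_cons]
    exact (h a (Multiset.mem_cons_self a s)).mul_mul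
      (ih fun e he => h e (Multiset.mem_cons_of_mem he))

theorem stmt13 {D : Type*} [CommRing D] [IsDomain D] (τ : D → D → Prop)
    (hsym : TauSymm τ) (href : TauRefinable τ) (hap : TauAssocPres τ)
    (hatomic : TauAtomic τ) :
    TauWFFD τ ↔ TauIdf τ := by
  classical
  constructor
  · intro hW x hx
    obtain ⟨s, hs⟩ := hW x hx
    exact ⟨s, fun b _ hb => hs b hb⟩
  · intro hidf x hx
    obtain ⟨s, hs⟩ := hidf x hx
    set t : Finset D :=
      s.filter (fun c => ∃ b, TauIrred τ b ∧ TauDvd τ b x ∧ Associated b c) with ht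
    have htcover : ∀ b, TauIrred τ b → TauDvd τ b x → ∃ c ∈ t, Associated b c := by
      intro b hb hbd
      obtain ⟨c, hc, hbc⟩ := hs b hb hbd
      exact ⟨c, Finset.mem_filter.mpr ⟨hc, ⟨b, hb, hbd, hbc⟩⟩, hbc⟩
    have htnonunit : ∀ c ∈ t, ¬ IsUnit c := by
      intro c hc hu
      obtain ⟨-, b, hb, -, hbc⟩ := Finset.mem_filter.mp hc
      exact hb.1.2 (hbc.symm.isUnit hu)
    have hx0 : x ≠ 0 := hx.1
    set Z : Set (Multiset {c // c ∈ t}) :=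
      {m | Associated (m.map (Subtype.val : {c // c ∈ t} → D)).prod x} with hZ
    have hanti : ∀ m ∈ Z, ∀ m' ∈ Z, m ≤ m' → m = m' := by
      intro m hm m' hm' hle
      have hsub : m' - m + m = m' := tsub_add_cancel_of_le hle
      by_contra hne
      have hd0 : m' - m ≠ 0 := by
        intro h0
        rw [h0, zero_add] at hsub
        exact hne hsub
      obtain ⟨e, he⟩ := Multiset.exists_mem_of_ne_zero hd0
      have hprod : ((m' - m).map (Subtype.val : {c // c ∈ t} → D)).prod * (m.map (Subtype.val : {c // c ∈ t} → D)).prod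
          = (m'.map (Subtype.val : {c // c ∈ t} → D)).prod := by
        rw [← Multiset.prod_add, ← Multiset.map_add, hsub]
      have h1 : Associated ((m.map (Subtype.val : {c // c ∈ t} → D)).prod) x := hm
      have h2 : Associated ((m'.map (Subtype.val : {c // c ∈ t} → D)).prod) x := hm'
      have h3 : Associated (((m' - m).map (Subtype.val : {c // c ∈ t} → D)).prod *
          (m.map (Subtype.val : {c // c ∈ t} → D)).prod) ((m.map (Subtype.val : {c // c ∈ t} → D)).prod) := by
        rw [hprod]; exact h2.trans h1.symm
      obtain ⟨u, hu⟩ := h3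
      have hP0 : (m.map (Subtype.val : {c // c ∈ t} → D)).prod ≠ 0 := by
        intro h0
        obtain ⟨v, hv⟩ := h1
        rw [h0, zero_mul] at hv
        exact hx0 hv.symm
      have hone : ((m' - m).map (Subtype.val : {c // c ∈ t} → D)).prod * (u : D) = 1 := by
        apply mul_right_cancel₀ hP0
        rw [one_mul]
        linear_combination hu
      have hunit : IsUnit ((m' - m).map (Subtype.val : {c // c ∈ t} → D)).prod :=
        IsUnit.of_mul_eq_one _ hone
      exact htnonunit e e.2
        (isUnit_of_dvd_unit (Multiset.dvd_prod (Multiset.mem_map_of_mem _ he)) hunit)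
    have hZfin : Z.Finite := by
      have hinj : Set.InjOn (Multiset.toFinsupp (α := {c // c ∈ t})) Z :=
        fun a _ b _ h => Multiset.toFinsupp.injective h
      have hPWO := Set.isPWO_of_wellQuasiOrderedLE (Multiset.toFinsupp '' Z)
      have hA : IsAntichain (· ≤ ·) (Multiset.toFinsupp '' Z) := by
        rintro f ⟨m, hm, rfl⟩ g ⟨m', hm', rfl⟩ hne hle
        refine hne (congrArg _ (hanti m hm m' hm' ?_))
        rw [Multiset.le_iff_count]
        intro a
        simpa only [Multiset.toFinsupp_apply] using Finsupp.le_def.mp hle a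
      exact Set.Finite.of_finite_image (hA.finite_of_partiallyWellOrderedOn hPWO) hinj
    refine ⟨hZfin.toFinset.biUnion (fun M => M.powerset.toFinset.image
      (fun m => (m.map (Subtype.val : {c // c ∈ t} → D)).prod)), ?_⟩
    intro b hbdvd
    obtain ⟨l, hl, hbl⟩ := hbdvd
    set g : D → List D := fun c => if h : NzNonunit c then (hatomic c h).choose else [c] with hg
    have hgspec : ∀ c ∈ l, TauAtomicFact τ (g c) c := by
      intro c hc
      have hcnz : NzNonunit c := hl.2.1 c hc
      simp only [hg, dif_pos hcnz]
      exact (hatomic c hcnz).choose_spec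
    have hF2 : List.Forall₂ (fun c mm => TauFact τ mm c) l (l.map g) := by
      rw [List.forall₂_map_right_iff, List.forall₂_same]
      exact fun c hc => (hgspec c hc).1
    have hflat : TauFact τ ((l.map g).flatten) x := href x l (l.map g) hl hF2
    have hirr : ∀ e ∈ (l.map g).flatten, TauIrred τ e ∧ TauDvd τ e x := by
      intro e he
      obtain ⟨mm, hmm, hemm⟩ := List.mem_flatten.mp he
      obtain ⟨c, hc, rfl⟩ := List.mem_map.mp hmm
      exact ⟨(hgspec c hc).2 e hemm, ⟨(l.map g).flatten, hflat, he⟩⟩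
    have hsel : ∀ e ∈ (l.map g).flatten, ∃ c ∈ t, Associated e c :=
      fun e he => htcover e (hirr e he).1 (hirr e he).2
    obtain ⟨e0, l0, hcons⟩ := List.exists_cons_of_ne_nil (hgspec b hbl).1.1
    have he0 : e0 ∈ g b := by rw [hcons]; exact List.mem_cons_self
    have hgbsub : (g b).Sublist ((l.map g).flatten) :=
      List.sublist_flatten_of_mem (List.mem_map_of_mem (f := g) hbl)
    have he0flat : e0 ∈ (l.map g).flatten := hgbsub.subset he0
    obtain ⟨c0, hc0t, -⟩ := hsel e0 he0flat
    set f : D → {c // c ∈ t} := fun e =>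
      if h : ∃ c ∈ t, Associated e c then ⟨h.choose, h.choose_spec.1⟩ else ⟨c0, hc0t⟩ with hf
    have hfspec : ∀ e ∈ (l.map g).flatten, Associated e (Subtype.val (f e)) := by
      intro e he
      have h := hsel e he
      simp only [hf, dif_pos h]
      exact h.choose_spec.2
    set M : Multiset {c // c ∈ t} := (((l.map g).flatten : List D) : Multiset D).map f with hM
    have hMZ : M ∈ Z := by
      show Associated (M.map (Subtype.val : {c // c ∈ t} → D)).prod x
      have h1 : Associated ((((l.map g).flatten : List D) : Multiset D)).prod
          (((((l.map g).flatten : List D) : Multiset D)).map (fun e => Subtype.val (f e))).prod :=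
        assocProdMap _ _ (fun e he => hfspec e (by rwa [Multiset.mem_coe] at he))
      have h2 : Associated ((((l.map g).flatten : List D) : Multiset D)).prod x := by
        obtain ⟨u, hu⟩ := hflat.2.2.2
        exact ⟨u, by rw [Multiset.prod_coe]; linear_combination -hu⟩
      rw [hM, Multiset.map_map]
      exact (h1.symm.trans h2)
    set mb : Multiset {c // c ∈ t} := ((g b : List D) : Multiset D).map f with hmb
    have hmble : mb ≤ M := Multiset.map_le_map (Multiset.coe_le.mpr hgbsub.subperm)
    have hbassoc : Associated b ((mb.map (Subtype.val : {c // c ∈ t} → D)).prod) := by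
      have h1 : Associated ((g b).prod) b := by
        obtain ⟨u, hu⟩ := (hgspec b hbl).1.2.2.2
        exact ⟨u, by linear_combination -hu⟩
      have h2 : Associated (((g b : List D) : Multiset D)).prod
          ((((g b : List D) : Multiset D)).map (fun e => Subtype.val (f e))).prod :=
        assocProdMap _ _ (fun e he => hfspec e (hgbsub.subset (by rwa [Multiset.mem_coe] at he)))
      rw [hmb, Multiset.map_map]
      refine (h1.symm.trans ?_)
      rw [← Multiset.prod_coe (g b)]
      exact h2
    refine ⟨(mb.map (Subtype.val : {c // c ∈ t} → D)).prod, ?_, hbassoc⟩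
    exact Finset.mem_biUnion.mpr ⟨M, hZfin.mem_toFinset.mpr hMZ,
      Finset.mem_image.mpr ⟨mb, Multiset.mem_toFinset.mpr (Multiset.mem_powerset.mpr hmble), rfl⟩⟩
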